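/- Let G be the incidence graph of a projective plane PG(2,q) (i.e., the bipartite point–line incidence graph, which is (q+1)-regular on n = 2(q²+q+1) vertices with eigenvalues q+1, √q, −√q, −(q+1)). Then α₂(G) ≤ 2, and consequently χ₂(G) ≥ q² + q + 1. -/

import Mathlib

open Polynomial Finset

/-- The independence number of a simple graph: the maximum size of a set of
pairwise non-adjacent vertices. -/
noncomputable def SimpleGraph.indepNumFinset {V : Type*} [Fintype V] (G : SimpleGraph V) : ℕ :=
  sSup {m | ∃ s : Finset V, s.card = m ∧ ∀ u ∈ s, ∀ v ∈ s, ¬ G.Adj u v}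

/-- The `k`-th power of a graph: distinct vertices are adjacent iff
their distance in `G` is (finite and) at most `k`. -/
def SimpleGraph.power {V : Type*} (G : SimpleGraph V) (k : ℕ) : SimpleGraph V where
  Adj u v := u ≠ v ∧ G.Reachable u v ∧ G.dist u v ≤ k
  symm := by
    constructor
    intro u v ⟨h1, h2, h3⟩
    exact ⟨h1.symm, h2.symm, by rwa [SimpleGraph.dist_comm]⟩
  loopless := by constructor; intro u ⟨h, _⟩; exact h rfl

/-- The `k`-independence number: the maximum size of a set of vertices at
pairwise distance greater than `k`. -/
noncomputable def SimpleGraph.kIndepNum {V : Type*} [Fintype V] (G : SimpleGraph V) (k : ℕ) : ℕ :=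
  (G.power k).indepNumFinset
/-- The point–line incidence graph of an incidence structure: vertices are points and
lines, a point is adjacent to each line containing it. -/
def incidenceGraph (P L : Type*) [Membership P L] : SimpleGraph (P ⊕ L) where
  Adj x y :=
    match x, y with
    | Sum.inl p, Sum.inr l => p ∈ l
    | Sum.inr l, Sum.inl p => p ∈ l
    | _, _ => False
  symm := by constructor; rintro (p | l) (p' | l') h <;> simp_all
  loopless := by constructor; rintro (p | l) h <;> simp_all


section Aux

variable {P L : Type*} [Membership P L] [Configuration.ProjectivePlane P L]

omit [Configuration.ProjectivePlane P L] in
lemma incidence_adj_pl (p : P) (l : L) (h : p ∈ l) :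
    (incidenceGraph P L).Adj (Sum.inl p) (Sum.inr l) := h

lemma power2_adj_points {p p' : P} (h : p ≠ p') :
    ((incidenceGraph P L).power 2).Adj (Sum.inl p) (Sum.inl p') := by
  obtain ⟨h1, h2⟩ := Configuration.HasLines.mkLine_ax (P := P) (L := L) h
  set l := Configuration.HasLines.mkLine (P := P) (L := L) h
  let w : (incidenceGraph P L).Walk (Sum.inl p) (Sum.inl p') :=
    SimpleGraph.Walk.cons (incidence_adj_pl p l h1)
      (SimpleGraph.Walk.cons ((incidence_adj_pl p' l h2).symm)
        SimpleGraph.Walk.nil)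
  exact ⟨by simpa using h, w.reachable, SimpleGraph.dist_le w⟩

lemma power2_adj_lines {l l' : L} (h : l ≠ l') :
    ((incidenceGraph P L).power 2).Adj (Sum.inr l) (Sum.inr l') := by
  obtain ⟨h1, h2⟩ := Configuration.HasPoints.mkPoint_ax (P := P) (L := L) h
  set p := Configuration.HasPoints.mkPoint (P := P) (L := L) h
  let w : (incidenceGraph P L).Walk (Sum.inr l) (Sum.inr l') :=
    SimpleGraph.Walk.cons ((incidence_adj_pl p l h1).symm)
      (SimpleGraph.Walk.cons (incidence_adj_pl p l' h2) SimpleGraph.Walk.nil)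
  exact ⟨by simpa using h, w.reachable, SimpleGraph.dist_le w⟩

end Aux

/-- For the incidence graph `G` of a projective plane of order `q`, `α₂(G) ≤ 2`, and
consequently `χ₂(G) = χ(G²) ≥ q² + q + 1`. -/
theorem incidence_graph_projective_plane_alpha2 (P L : Type*) [Membership P L]
    [Fintype P] [Fintype L] [Configuration.ProjectivePlane P L] :
    (incidenceGraph P L).kIndepNum 2 ≤ 2 ∧
    ∀ c : ℕ, ((incidenceGraph P L).power 2).chromaticNumber = c →
      (Configuration.ProjectivePlane.order P L) ^ 2 +
        Configuration.ProjectivePlane.order P L + 1 ≤ c := by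
  classical
  constructor
  · -- alpha_2 <= 2
    rw [SimpleGraph.kIndepNum, SimpleGraph.indepNumFinset]
    refine csSup_le ⟨0, ∅, by simp⟩ ?_
    rintro m ⟨s, rfl, hs⟩
    by_contra hm
    push_neg at hm
    have h3 : Fintype.card Bool < s.card := by simpa
    obtain ⟨u, hu, v, hv, huv, heq⟩ :=
      Finset.exists_ne_map_eq_of_card_lt_of_maps_to h3
        (fun x _ => Finset.mem_univ (Sum.isLeft x))
    rcases u with p | l <;> rcases v with p' | l'
    · exact hs _ hu _ hv (power2_adj_points (by simpa using huv))
    · simp at heq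
    · simp at heq
    · exact hs _ hu _ hv (power2_adj_lines (by simpa using huv))
  · intro c hc
    have hclique : ((incidenceGraph P L).power 2).IsClique
        ((Finset.univ.image (Sum.inl : P → P ⊕ L)) : Finset (P ⊕ L)) := by
      intro u hu v hv huv
      simp only [Finset.coe_image, Finset.coe_univ, Set.image_univ, Set.mem_range] at hu hv
      obtain ⟨p, rfl⟩ := hu
      obtain ⟨p', rfl⟩ := hv
      exact power2_adj_points (by simpa using huv)
    have hle := hclique.card_le_chromaticNumber
    rw [hc] at hle
    have hcard : (Finset.univ.image (Sum.inl : P → P ⊕ L)).card = Fintype.card P := by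
      rw [Finset.card_image_of_injective _ Sum.inl_injective, Finset.card_univ]
    rw [hcard, Nat.cast_le] at hle
    rwa [Configuration.ProjectivePlane.card_points P L] at hle
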